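/- For a real number g with 1 + 12g > 0 and g ≠ 0, set a(g) = (√(1+12g) − 1)/(6g) and m_2(g) = (4·a(g) − a(g)^2)/3. Then lim_{g → (−1/12)^+} ( m_2(g) − 4/3 + 16·(g + 1/12) ) / (g + 1/12)^{3/2} = 64·√3. In other words, m_2(g) = 4/3 − 16·(g − g_c) + 64√3·(g − g_c)^{3/2} + o((g−g_c)^{3/2}) as g → g_c^+, where g_c = −1/12. -/

import Mathlib

open Filter Topology

theorem stmt_5 :
    Filter.Tendsto
      (fun g : ℝ =>
        ((4 * ((Real.sqrt (1 + 12 * g) - 1) / (6 * g)) -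
            ((Real.sqrt (1 + 12 * g) - 1) / (6 * g)) ^ 2) / 3
          - 4 / 3 + 16 * (g + 1 / 12)) / (g + 1 / 12) ^ ((3 : ℝ) / 2))
      (𝓝[>] (-1 / 12))
      (𝓝 (64 * Real.sqrt 3)) := by
  have h3 : (0:ℝ) < Real.sqrt 3 := Real.sqrt_pos.mpr (by norm_num)
  have h3sq : Real.sqrt 3 ^ 2 = 3 := Real.sq_sqrt (by norm_num)
  have hF : Filter.Tendsto
      (fun g : ℝ => 32 * Real.sqrt 3 * (Real.sqrt (1 + 12 * g) + 2) /
        (Real.sqrt (1 + 12 * g) + 1) ^ 2) (𝓝[>] (-1/12)) (𝓝 (64 * Real.sqrt 3)) := by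
    have hc : ContinuousAt (fun g : ℝ => 32 * Real.sqrt 3 * (Real.sqrt (1 + 12 * g) + 2) /
        (Real.sqrt (1 + 12 * g) + 1) ^ 2) (-1/12) := by
      apply ContinuousAt.div
      · fun_prop
      · fun_prop
      · have : (1 + 12 * (-1/12 : ℝ)) = 0 := by norm_num
        simp [this]
    have h0 : Real.sqrt (1 + 12 * (-1/12 : ℝ)) = 0 := by norm_num
    have := hc.continuousWithinAt (s := Set.Ioi (-1/12 : ℝ))
    have ht := this.tendsto
    rw [h0] at ht
    norm_num at ht ⊢
    convert ht using 2
    ring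
  apply hF.congr'
  have hmem : Set.Ioo (-1/12 : ℝ) 0 ∈ 𝓝[>] (-1/12 : ℝ) :=
    Ioo_mem_nhdsGT_of_mem ⟨le_refl _, by norm_num⟩
  filter_upwards [hmem] with g hg
  obtain ⟨hg1, hg2⟩ := hg
  have h1 : (0:ℝ) < 1 + 12 * g := by linarith
  set s := Real.sqrt (1 + 12 * g) with hs
  have hs2 : s ^ 2 = 1 + 12 * g := Real.sq_sqrt h1.le
  have hs0 : 0 < s := Real.sqrt_pos.mpr h1
  have hs1 : s < 1 := by
    have := Real.sqrt_lt_sqrt (le_of_lt h1) (show 1 + 12*g < 1 by linarith)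
    simpa [hs] using this
  have hgne : g ≠ 0 := ne_of_lt hg2
  have hgp : (0:ℝ) < g + 1/12 := by linarith
  have hsq : Real.sqrt (g + 1/12) = s / (2 * Real.sqrt 3) := by
    rw [show g + 1/12 = (s / (2 * Real.sqrt 3)) ^ 2 by
      field_simp
      nlinarith [hs2, h3sq]]
    exact Real.sqrt_sq (by positivity)
  have hrpow : (g + 1/12) ^ ((3:ℝ)/2) = s ^ 3 * Real.sqrt 3 / 72 := by
    have heq : (g + 1/12) ^ ((3:ℝ)/2) = Real.sqrt (g + 1/12) ^ (3:ℕ) := by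
      rw [← Real.rpow_natCast (Real.sqrt (g + 1/12)) 3, Real.sqrt_eq_rpow,
        ← Real.rpow_mul hgp.le]
      norm_num
    rw [heq, hsq, div_pow, div_eq_div_iff (by positivity) (by norm_num)]
    linear_combination (-(8:ℝ) * s ^ 3 * (Real.sqrt 3 ^ 2 + 3)) * h3sq
  have hsne : s + 1 ≠ 0 := by positivity
  have hne : s ^ 2 - 1 ≠ 0 := by nlinarith
  have hgval : g = (s ^ 2 - 1) / 12 := by linarith
  have key : (4 * ((s - 1) / (6 * g)) - ((s - 1) / (6 * g)) ^ 2) / 3 - 4 / 3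
      + 16 * (g + 1 / 12) = 4 / 3 * s ^ 3 * (s + 2) / (s + 1) ^ 2 := by
    rw [hgval]
    field_simp
    ring
  rw [hrpow, key]
  field_simp
  ring_nf
  linear_combination (96:ℝ) * h3sq
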